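/- Fix d ≥ 1 and a finite set X = [n] with n ≥ 1, and let H be the first Cantor class on X with parameter d. Then the DS dimension of H equals 1: no pair of points of X is DS-shattered by H, while every single point is DS-shattered (e.g. by {h_∅, h_{\{x\}}}). -/
import Mathlib


open scoped Classical

/-- The hypothesis `h_A` of the first Cantor class: `h_A x = A` if `x ∈ A`, else `*`
(encoded as `none`). -/
def cantorHyp {n : ℕ} (A : Finset (Fin n)) : Fin n → Option (Finset (Fin n)) :=
  fun x => if x ∈ A then some A else none

/-- The first Cantor class on `[n]` with parameter `d`. -/
def cantorClass (n d : ℕ) : Set (Fin n → Option (Finset (Fin n))) :=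
  {h | ∃ A : Finset (Fin n), A.card ≤ d ∧ h = cantorHyp A}

/-- `H` DS-shatters the tuple of (distinct) points `xs`. -/
def DSShatters {X Y : Type*} (H : Set (X → Y)) {d : ℕ} (xs : Fin d → X) : Prop :=
  Function.Injective xs ∧
    ∃ F : Finset (X → Y), ↑F ⊆ H ∧ F.Nonempty ∧
      ∀ h ∈ F, ∀ i : Fin d, ∃ g ∈ F,
        g (xs i) ≠ h (xs i) ∧ ∀ j : Fin d, j ≠ i → g (xs j) = h (xs j)

lemma cantorHyp_eq_some {n : ℕ} {A B : Finset (Fin n)} {x : Fin n}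
    (h : cantorHyp B x = some A) : x ∈ B ∧ B = A := by
  unfold cantorHyp at h
  split_ifs at h with hx
  exact ⟨hx, Option.some.inj h⟩

/-- The DS dimension of the first Cantor class equals `1`: every single
point of `[n]` is DS-shattered, while no pair of points is DS-shattered. -/
theorem cantor_ds_dimension_one (d n : ℕ) (hd : 1 ≤ d) (hn : 1 ≤ n) :
    (∀ xs : Fin 1 → Fin n, DSShatters (cantorClass n d) xs) ∧
    (∀ xs : Fin 2 → Fin n, ¬ DSShatters (cantorClass n d) xs) := by
  constructor
  · intro xs
    refine ⟨fun a b _ => Subsingleton.elim a b,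
      {cantorHyp ∅, cantorHyp {xs 0}}, ?_, ?_, ?_⟩
    · intro f hf
      simp only [Finset.coe_insert, Finset.coe_singleton, Set.mem_insert_iff,
        Set.mem_singleton_iff] at hf
      rcases hf with rfl | rfl
      · exact ⟨∅, by simp, rfl⟩
      · exact ⟨{xs 0}, by simpa using hd, rfl⟩
    · exact ⟨cantorHyp ∅, by simp⟩
    · intro h hh i
      have hi : i = 0 := Subsingleton.elim _ _
      subst hi
      simp only [Finset.mem_insert, Finset.mem_singleton] at hh
      rcases hh with rfl | rfl
      · refine ⟨cantorHyp {xs 0}, by simp, ?_, ?_⟩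
        · simp [cantorHyp]
        · intro j hj; exact absurd (Subsingleton.elim j 0) hj
      · refine ⟨cantorHyp ∅, by simp, ?_, ?_⟩
        · simp [cantorHyp]
        · intro j hj; exact absurd (Subsingleton.elim j 0) hj
  · rintro xs ⟨hinj, F, hF, ⟨h0, hh0⟩, hshat⟩
    have key : ∀ g ∈ F, ∀ i : Fin 2, g (xs i) = none := by
      intro g hg i
      obtain ⟨B, hBd, rfl⟩ := hF hg
      by_contra hne
      have hx : xs i ∈ B := by
        by_contra hxB
        exact hne (by simp [cantorHyp, hxB])
      have hval : cantorHyp B (xs i) = some B := by simp [cantorHyp, hx]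
      -- take the neighbor in the other direction
      obtain ⟨g', hg', hne', heq'⟩ := hshat _ hg (1 - i)
      have hii : i ≠ 1 - i := by
        fin_cases i <;> decide
      have hgi : g' (xs i) = some B := (heq' i hii).trans hval
      obtain ⟨B', hBd', rfl⟩ := hF hg'
      obtain ⟨hxB', rfl⟩ := cantorHyp_eq_some hgi
      exact hne' rfl
    obtain ⟨g, hg, hne, -⟩ := hshat h0 hh0 0
    exact hne ((key g hg 0).trans (key h0 hh0 0).symm)
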